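/- Every exponential polynomial f : ℝ^d → ℂ solves the Popoviciu–Ionescu functional equation in d variables for all n large enough: there exists N such that for every n ≥ N and all x, h ∈ ℝ^d, the determinant of the (n+1)×(n+1) matrix whose (i,j) entry is f(x + (i+j)h), for 0 ≤ i, j ≤ n, equals zero. -/
import Mathlib

open Finset Polynomial

-- degree bound for substituting degree-≤1 polynomials
lemma natDegree_aeval_linear_le {d : ℕ} (P : MvPolynomial (Fin d) ℂ)
    (u : Fin d → Polynomial ℂ) (hu : ∀ i, (u i).natDegree ≤ 1) :
    (MvPolynomial.aeval u P).natDegree ≤ P.totalDegree := by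
  rw [MvPolynomial.aeval_def, MvPolynomial.eval₂_eq]
  apply Polynomial.natDegree_sum_le_of_forall_le
  intro s hs
  refine (Polynomial.natDegree_mul_le).trans ?_
  have h1 : ((algebraMap ℂ (Polynomial ℂ)) (MvPolynomial.coeff s P)).natDegree = 0 := by
    simp [Polynomial.natDegree_C]
  rw [h1, zero_add]
  refine (Polynomial.natDegree_prod_le _ _).trans ?_
  refine le_trans ?_ (MvPolynomial.le_totalDegree hs)
  rw [Finsupp.sum]
  apply Finset.sum_le_sum
  intro i _
  exact (Polynomial.natDegree_pow_le).trans
    (by nlinarith [hu i, Nat.zero_le (s i)])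

lemma det_mul_eq_zero_of_card_lt {n : ℕ} {ι : Type*} [Fintype ι] [DecidableEq ι]
    (A : Matrix (Fin n) ι ℂ) (B : Matrix ι (Fin n) ℂ) (hcard : Fintype.card ι < n) :
    (A * B).det = 0 := by
  by_contra hdet
  have h1 : (A * B).rank ≤ Fintype.card ι :=
    (Matrix.rank_mul_le_left A B).trans (Matrix.rank_le_card_width A)
  have h2 : (A * B).rank = n := by
    rw [Matrix.rank_of_isUnit _ ((Matrix.isUnit_iff_isUnit_det _).2
      (isUnit_iff_ne_zero.2 hdet)), Fintype.card_fin]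
  omega

lemma binom_ext (u v : ℂ) {a E : ℕ} (ha : a ≤ E) :
    (u + v) ^ a = ∑ b ∈ range (E + 1), u ^ b * v ^ (a - b) * (a.choose b) := by
  rw [add_pow]
  refine Finset.sum_subset ?_ ?_
  · exact Finset.range_subset_range.2 (by omega)
  · intro b hb hnb
    simp only [mem_range] at hb hnb
    have : a < b := by omega
    simp [Nat.choose_eq_zero_of_lt this]

/-- `f : ℝ^d → ℂ` is an exponential polynomial: a finite sum of terms
`P_k(x) * exp(⟨λ_k, x⟩)` with `P_k` complex polynomials and `λ_k ∈ ℂ^d`. -/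
def IsExpPoly {d : ℕ} (f : (Fin d → ℝ) → ℂ) : Prop :=
  ∃ (m : ℕ) (P : Fin m → MvPolynomial (Fin d) ℂ) (lam : Fin m → Fin d → ℂ),
    ∀ x : Fin d → ℝ,
      f x = ∑ k, MvPolynomial.eval (fun i => (x i : ℂ)) (P k) *
        Complex.exp (∑ i, lam k i * x i)

theorem expPoly_solves_popoviciu_ionescu
    {d : ℕ} (f : (Fin d → ℝ) → ℂ) (hf : IsExpPoly f) :
    ∃ N : ℕ, ∀ n ≥ N, ∀ x h : Fin d → ℝ,
      Matrix.det (fun i j : Fin (n + 1) => f (x + ((i : ℕ) + (j : ℕ)) • h)) = 0 := by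
  obtain ⟨m, P, lam, hP⟩ := hf
  set E : ℕ := Finset.univ.sup fun k => (P k).totalDegree with hE
  refine ⟨m * ((E + 1) * (E + 1)), fun n hn x h => ?_⟩
  set μ : Fin m → ℂ := fun k => Complex.exp (∑ i, lam k i * h i) with hμ
  set ν : Fin m → ℂ := fun k => Complex.exp (∑ i, lam k i * x i) with hν
  set Q : Fin m → Polynomial ℂ := fun k =>
    MvPolynomial.aeval
      (fun i => Polynomial.C (x i : ℂ) + Polynomial.C (h i : ℂ) * Polynomial.X) (P k) with hQdef
  have hQdeg : ∀ k, (Q k).natDegree < E + 1 := by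
    intro k
    have h1 : (Q k).natDegree ≤ (P k).totalDegree := by
      refine natDegree_aeval_linear_le _ _ fun i => ?_
      refine (Polynomial.natDegree_add_le _ _).trans (max_le (by simp) ?_)
      exact (Polynomial.natDegree_C_mul_le _ _).trans Polynomial.natDegree_X_le
    have h2 : (P k).totalDegree ≤ E := hE ▸ Finset.le_sup (f := fun k => (P k).totalDegree) (Finset.mem_univ k)
    exact Nat.lt_succ_of_le (h1.trans h2)
  -- expansion along the line
  have expand : ∀ t : ℕ, f (x + t • h) =
      ∑ k, ∑ a ∈ Finset.range (E + 1),
        (Q k).coeff a * (t : ℂ) ^ a * (ν k * μ k ^ t) := by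
    intro t
    rw [hP]
    refine Finset.sum_congr rfl fun k _ => ?_
    have hcoord : ∀ i', (((x + t • h) i' : ℝ) : ℂ) = (x i' : ℂ) + (h i' : ℂ) * (t : ℂ) := by
      intro i'
      simp only [Pi.add_apply, Pi.smul_apply, nsmul_eq_mul, Pi.mul_apply, Pi.natCast_apply]
      push_cast
      ring
    have hpoly : MvPolynomial.eval (fun i' => (((x + t • h) i' : ℝ) : ℂ)) (P k)
        = ∑ a ∈ Finset.range (E + 1), (Q k).coeff a * (t : ℂ) ^ a := by
      have h2 : Polynomial.eval ((t : ℕ) : ℂ) (Q k)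
          = MvPolynomial.eval (fun i' => (x i' : ℂ) + (h i' : ℂ) * (t : ℂ)) (P k) := by
        have h3 := MvPolynomial.comp_aeval_apply (R := ℂ)
          (Polynomial.aeval ((t : ℕ) : ℂ))
          (f := fun i => Polynomial.C ((x i : ℝ) : ℂ) +
            Polynomial.C ((h i : ℝ) : ℂ) * Polynomial.X) (P k)
        simp only [map_add, map_mul, Polynomial.aeval_C, Polynomial.aeval_X,
          Algebra.algebraMap_self, RingHom.id_apply] at h3
        rw [hQdef, ← congrFun (Polynomial.coe_aeval_eq_eval ((t : ℕ) : ℂ)) _, h3,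
          MvPolynomial.aeval_def, Algebra.algebraMap_self]
        rfl
      simp only [hcoord]
      rw [← h2, Polynomial.eval_eq_sum_range' (hQdeg k)]
    have hexp : (∑ i', lam k i' * (((x + t • h) i' : ℝ) : ℂ)) =
        (∑ i', lam k i' * x i') + t * ∑ i', lam k i' * h i' := by
      simp only [hcoord]
      rw [Finset.mul_sum, ← Finset.sum_add_distrib]
      exact Finset.sum_congr rfl fun i' _ => by ring
    rw [hpoly, hexp, Complex.exp_add, Complex.exp_nat_mul, Finset.sum_mul]
  -- the factorization
  set A : Matrix (Fin (n + 1)) (Fin m × Fin (E + 1) × Fin (E + 1)) ℂ :=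
    fun i s => ((i : ℕ) : ℂ) ^ (s.2.1 : ℕ) * μ s.1 ^ (i : ℕ) with hA
  set B : Matrix (Fin m × Fin (E + 1) × Fin (E + 1)) (Fin (n + 1)) ℂ :=
    fun s j => (Q s.1).coeff (s.2.2 : ℕ) * ((s.2.2 : ℕ).choose (s.2.1 : ℕ)) *
      ((j : ℕ) : ℂ) ^ ((s.2.2 : ℕ) - (s.2.1 : ℕ)) * (ν s.1 * μ s.1 ^ (j : ℕ)) with hB
  have hfac : (fun i j : Fin (n + 1) => f (x + ((i : ℕ) + (j : ℕ)) • h)) = A * B := by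
    funext i j
    show f _ = (A * B) i j
    rw [Matrix.mul_apply, expand ((i : ℕ) + (j : ℕ)), Fintype.sum_prod_type]
    refine Finset.sum_congr rfl fun k _ => ?_
    have step1 : ∀ a ∈ Finset.range (E + 1),
        (Q k).coeff a * (((i : ℕ) + (j : ℕ) : ℕ) : ℂ) ^ a *
          (ν k * μ k ^ ((i : ℕ) + (j : ℕ))) =
        ∑ b ∈ Finset.range (E + 1),
          (((i : ℕ) : ℂ) ^ b * μ k ^ (i : ℕ)) *
            ((Q k).coeff a * (a.choose b) * ((j : ℕ) : ℂ) ^ (a - b) *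
              (ν k * μ k ^ (j : ℕ))) := by
      intro a ha
      have hab : a ≤ E := Nat.lt_succ_iff.1 (Finset.mem_range.1 ha)
      rw [Nat.cast_add, binom_ext ((i : ℕ) : ℂ) ((j : ℕ) : ℂ) hab,
        pow_add (μ k), Finset.mul_sum, Finset.sum_mul]
      exact Finset.sum_congr rfl fun b _ => by ring
    calc
      ∑ a ∈ Finset.range (E + 1),
          (Q k).coeff a * (((i : ℕ) + (j : ℕ) : ℕ) : ℂ) ^ a *
            (ν k * μ k ^ ((i : ℕ) + (j : ℕ)))
        = ∑ a ∈ Finset.range (E + 1), ∑ b ∈ Finset.range (E + 1),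
            (((i : ℕ) : ℂ) ^ b * μ k ^ (i : ℕ)) *
              ((Q k).coeff a * (a.choose b) * ((j : ℕ) : ℂ) ^ (a - b) *
                (ν k * μ k ^ (j : ℕ))) := Finset.sum_congr rfl step1
      _ = ∑ b ∈ Finset.range (E + 1), ∑ a ∈ Finset.range (E + 1),
            (((i : ℕ) : ℂ) ^ b * μ k ^ (i : ℕ)) *
              ((Q k).coeff a * (a.choose b) * ((j : ℕ) : ℂ) ^ (a - b) *
                (ν k * μ k ^ (j : ℕ))) := Finset.sum_comm
      _ = ∑ b : Fin (E + 1), ∑ a ∈ Finset.range (E + 1),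
            (((i : ℕ) : ℂ) ^ (b : ℕ) * μ k ^ (i : ℕ)) *
              ((Q k).coeff a * (a.choose b) * ((j : ℕ) : ℂ) ^ (a - (b : ℕ)) *
                (ν k * μ k ^ (j : ℕ))) :=
          (Fin.sum_univ_eq_sum_range _ _).symm
      _ = ∑ y : Fin (E + 1) × Fin (E + 1), A i (k, y) * B (k, y) j := by
          rw [Fintype.sum_prod_type]
          refine Finset.sum_congr rfl fun b _ => ?_
          rw [← Fin.sum_univ_eq_sum_range (fun a =>
            (((i : ℕ) : ℂ) ^ (b : ℕ) * μ k ^ (i : ℕ)) *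
              ((Q k).coeff a * (a.choose (b : ℕ)) * ((j : ℕ) : ℂ) ^ (a - (b : ℕ)) *
                (ν k * μ k ^ (j : ℕ))))]
  rw [hfac]
  refine det_mul_eq_zero_of_card_lt A B ?_
  simp only [Fintype.card_prod, Fintype.card_fin]
  omega
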